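/- Let n ≥ 3, let μ = e₁ + ie₂, and let W ∈ C_c¹(ℝⁿ; ℂⁿ) with supp W ⊆ B(0,M). Let φ = N_μ^{-1}(−μ·W) solve (∂₁ + i∂₂)φ = −(W₁ + iW₂) with the decay |φ(x)| ≤ C⟨x'⟩^{-1} where x' = (x₁,x₂). Then for each fixed x'' ∈ ℝ^{n−2}, lim_{R→∞} i ∫_{|x'|=R} e^{iφ(x',x'')}(ν₁ + iν₂) dS(x') = ∫_{ℝ²} (e₁+ie₂)·W(x',x'') dx'. -/

import Mathlib

open MeasureTheory Complex Filter Set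

noncomputable def eC (θ : ℝ) : ℂ := (Real.cos θ : ℂ) + (Real.sin θ : ℂ) * I

lemma green {m : ℕ} (V φ : ℝ × ℝ × EuclideanSpace ℝ (Fin m) → ℂ)
    (hV : Continuous V) (hφ : ContDiff ℝ 1 φ)
    (heq : ∀ p, fderiv ℝ φ p (1, 0, 0) + I * fderiv ℝ φ p (0, 1, 0) = -V p)
    (x'' : EuclideanSpace ℝ (Fin m)) (R : ℝ) :
    (∫ r in (0:ℝ)..R, ∫ θ in (0:ℝ)..(2 * Real.pi),
        ((r : ℂ) * V (r * Real.cos θ, r * Real.sin θ, x''))) =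
      -∫ θ in (0:ℝ)..(2 * Real.pi),
        (R : ℂ) * φ (R * Real.cos θ, R * Real.sin θ, x'') * eC θ := by
  have hφd : Differentiable ℝ φ := hφ.differentiable one_ne_zero
  set u : ℝ × ℝ → ℂ := fun q =>
    (q.1 : ℂ) * φ (q.1 * Real.cos q.2, q.1 * Real.sin q.2, x'') * eC q.2 with hu_def
  set g : ℝ × ℝ → ℂ := fun q =>
    I * φ (q.1 * Real.cos q.2, q.1 * Real.sin q.2, x'') * eC q.2 with hg_def
  -- differentiability
  have hP : Differentiable ℝ (fun q : ℝ × ℝ =>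
      ((q.1 * Real.cos q.2, q.1 * Real.sin q.2, x'') : ℝ × ℝ × EuclideanSpace ℝ (Fin m))) := by
    apply Differentiable.prodMk
    · exact differentiable_fst.mul (Real.differentiable_cos.comp differentiable_snd)
    · exact (differentiable_fst.mul (Real.differentiable_sin.comp differentiable_snd)).prodMk
        (differentiable_const _)
  have hΦ : Differentiable ℝ (fun q : ℝ × ℝ =>
      φ (q.1 * Real.cos q.2, q.1 * Real.sin q.2, x'')) := hφd.comp hP
  have heCd : Differentiable ℝ eC := by
    unfold eC
    exact (Complex.ofRealCLM.differentiable.comp Real.differentiable_cos).add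
      ((Complex.ofRealCLM.differentiable.comp Real.differentiable_sin).mul_const I)
  have hre : Differentiable ℝ (fun q : ℝ × ℝ => ((q.1 : ℝ) : ℂ)) :=
    Complex.ofRealCLM.differentiable.comp differentiable_fst
  have hu : Differentiable ℝ u := (hre.mul hΦ).mul (heCd.comp differentiable_snd)
  have hg : Differentiable ℝ g :=
    ((differentiable_const I).mul hΦ).mul (heCd.comp differentiable_snd)
  -- directional derivatives
  have decomp : ∀ (p : ℝ × ℝ × EuclideanSpace ℝ (Fin m)) (v w : ℝ),
      fderiv ℝ φ p ((v, w, 0) : ℝ × ℝ × EuclideanSpace ℝ (Fin m)) =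
        v • fderiv ℝ φ p (1, 0, 0) + w • fderiv ℝ φ p (0, 1, 0) := by
    intro p v w
    have h : ((v, w, (0 : EuclideanSpace ℝ (Fin m))) : ℝ × ℝ × EuclideanSpace ℝ (Fin m)) =
        v • ((1, 0, 0) : ℝ × ℝ × EuclideanSpace ℝ (Fin m)) + w • (0, 1, 0) := by
      simp [Prod.ext_iff]
    rw [h, map_add, ContinuousLinearMap.map_smul, ContinuousLinearMap.map_smul]
  have key : ∀ r θ : ℝ, fderiv ℝ u (r, θ) (1, 0) + fderiv ℝ g (r, θ) (0, 1) =
      -((r : ℂ) * V (r * Real.cos θ, r * Real.sin θ, x'')) := by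
    intro r θ
    have hφ1 : HasDerivAt (fun t : ℝ => φ (t * Real.cos θ, t * Real.sin θ, x''))
        (fderiv ℝ φ (r * Real.cos θ, r * Real.sin θ, x'') (Real.cos θ, Real.sin θ, 0)) r :=
      (hφd _).hasFDerivAt.comp_hasDerivAt r
        ((hasDerivAt_mul_const _).prodMk ((hasDerivAt_mul_const _).prodMk (hasDerivAt_const _ _)))
    have hφ2 : HasDerivAt (fun t : ℝ => φ (r * Real.cos t, r * Real.sin t, x''))
        (fderiv ℝ φ (r * Real.cos θ, r * Real.sin θ, x'')
          (r * -Real.sin θ, r * Real.cos θ, 0)) θ :=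
      (hφd _).hasFDerivAt.comp_hasDerivAt θ
        (((Real.hasDerivAt_cos θ).const_mul r).prodMk
          (((Real.hasDerivAt_sin θ).const_mul r).prodMk (hasDerivAt_const _ _)))
    have hofReal : HasDerivAt (fun t : ℝ => (t : ℂ)) 1 r := by
      simpa using (hasDerivAt_id r).ofReal_comp
    have heC' : HasDerivAt eC (((-Real.sin θ : ℝ) : ℂ) + (Real.cos θ : ℂ) * I) θ :=
      ((Real.hasDerivAt_cos θ).ofReal_comp).add
        (((Real.hasDerivAt_sin θ).ofReal_comp).mul_const I)
    have du1 : HasDerivAt (fun t : ℝ => u (t, θ))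
        ((1 * φ (r * Real.cos θ, r * Real.sin θ, x'') +
          (r : ℂ) * fderiv ℝ φ (r * Real.cos θ, r * Real.sin θ, x'')
            (Real.cos θ, Real.sin θ, 0)) * eC θ) r := (hofReal.mul hφ1).mul_const (eC θ)
    have dg2 : HasDerivAt (fun t : ℝ => g (r, t))
        ((0 * φ (r * Real.cos θ, r * Real.sin θ, x'') +
          I * fderiv ℝ φ (r * Real.cos θ, r * Real.sin θ, x'')
            (r * -Real.sin θ, r * Real.cos θ, 0)) * eC θ +
          (I * φ (r * Real.cos θ, r * Real.sin θ, x'')) *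
            (((-Real.sin θ : ℝ) : ℂ) + (Real.cos θ : ℂ) * I)) θ :=
      ((hasDerivAt_const θ I).mul hφ2).mul heC'
    have link1 : HasDerivAt (fun t : ℝ => u (t, θ)) (fderiv ℝ u (r, θ) (1, 0)) r :=
      (hu _).hasFDerivAt.comp_hasDerivAt r ((hasDerivAt_id r).prodMk (hasDerivAt_const r θ))
    have link2 : HasDerivAt (fun t : ℝ => g (r, t)) (fderiv ℝ g (r, θ) (0, 1)) θ :=
      (hg _).hasFDerivAt.comp_hasDerivAt θ ((hasDerivAt_const θ r).prodMk (hasDerivAt_id θ))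
    rw [link1.unique du1, link2.unique dg2, decomp _ (Real.cos θ) (Real.sin θ),
      decomp _ (r * -Real.sin θ) (r * Real.cos θ)]
    have h1 : (Real.cos θ : ℂ) ^ 2 + (Real.sin θ : ℂ) ^ 2 = 1 := by
      norm_cast; exact Real.cos_sq_add_sin_sq θ
    have h2 := heq (r * Real.cos θ, r * Real.sin θ, x'')
    set a := fderiv ℝ φ (r * Real.cos θ, r * Real.sin θ, x'') (1, 0, 0) with ha
    set b := fderiv ℝ φ (r * Real.cos θ, r * Real.sin θ, x'') (0, 1, 0) with hb
    set Φ := φ (r * Real.cos θ, r * Real.sin θ, x'') with hΦ'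
    simp only [eC, Complex.real_smul, Complex.ofReal_mul, Complex.ofReal_neg]
    set c := (Real.cos θ : ℂ)
    set s := (Real.sin θ : ℂ)
    linear_combination (Φ * c + (r : ℂ) * b * s * c - (r : ℂ) * a * s ^ 2) * Complex.I_sq +
      ((r : ℂ) * a + (r : ℂ) * b * I) * h1 + (r : ℂ) * h2
  -- divergence theorem on [0,R] × [0,2π]
  have hkey' : (fun x : ℝ × ℝ => fderiv ℝ u x (1, 0) + fderiv ℝ g x (0, 1)) =
      (fun x : ℝ × ℝ => -((x.1 : ℂ) * V (x.1 * Real.cos x.2, x.1 * Real.sin x.2, x''))) :=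
    funext fun q => key q.1 q.2
  have hVc : Continuous (fun x : ℝ × ℝ =>
      -((x.1 : ℂ) * V (x.1 * Real.cos x.2, x.1 * Real.sin x.2, x''))) := by
    apply Continuous.neg
    apply Continuous.mul
    · exact Complex.continuous_ofReal.comp continuous_fst
    · apply hV.comp
      exact (continuous_fst.mul (Real.continuous_cos.comp continuous_snd)).prodMk
        ((continuous_fst.mul (Real.continuous_sin.comp continuous_snd)).prodMk
          continuous_const)
  have Hi : IntegrableOn (fun x : ℝ × ℝ => fderiv ℝ u x (1, 0) + fderiv ℝ g x (0, 1))
      (Set.uIcc 0 R ×ˢ Set.uIcc 0 (2 * Real.pi)) volume := by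
    rw [hkey']
    exact hVc.continuousOn.integrableOn_compact (isCompact_uIcc.prod isCompact_uIcc)
  have hdiv := integral2_divergence_prod_of_hasFDerivAt_off_countable u g
      (fun q => fderiv ℝ u q) (fun q => fderiv ℝ g q) 0 0 R (2 * Real.pi) ∅ Set.countable_empty
      hu.continuous.continuousOn hg.continuous.continuousOn
      (fun x _ => (hu x).hasFDerivAt) (fun x _ => (hg x).hasFDerivAt) Hi
  simp only [key] at hdiv
  have b1 : ∀ x : ℝ, g (x, 2 * Real.pi) = g (x, 0) := by
    intro x
    simp [hg_def, eC, Real.cos_two_pi, Real.sin_two_pi]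
  have b2 : ∀ y : ℝ, u (0, y) = 0 := by
    intro y
    simp [hu_def]
  simp only [b1, b2, sub_self, zero_add, intervalIntegral.integral_zero, sub_zero,
    intervalIntegral.integral_neg] at hdiv
  have hu' : ∀ y : ℝ, u (R, y) = (R : ℂ) * φ (R * Real.cos y, R * Real.sin y, x'') * eC y :=
    fun y => rfl
  simp only [hu'] at hdiv
  exact neg_eq_iff_eq_neg.mp hdiv


lemma polar_eq {m : ℕ} (V : ℝ × ℝ × EuclideanSpace ℝ (Fin m) → ℂ)
    (hV : Continuous V) (M : ℝ) (hM : 0 < M)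
    (hsupp : ∀ p : ℝ × ℝ × EuclideanSpace ℝ (Fin m),
      M ^ 2 ≤ p.1 ^ 2 + p.2.1 ^ 2 + ‖p.2.2‖ ^ 2 → V p = 0)
    (x'' : EuclideanSpace ℝ (Fin m)) (R : ℝ) (hR : M ≤ R) :
    (∫ y : ℝ × ℝ, V (y.1, y.2, x'')) =
      ∫ r in (0:ℝ)..R, ∫ θ in (0:ℝ)..(2 * Real.pi),
        ((r : ℂ) * V (r * Real.cos θ, r * Real.sin θ, x'')) := by
  have hvan : ∀ r θ : ℝ, M ≤ |r| → V (r * Real.cos θ, r * Real.sin θ, x'') = 0 := by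
    intro r θ h
    apply hsupp
    have h2 : (r * Real.cos θ) ^ 2 + (r * Real.sin θ) ^ 2 = r ^ 2 := by
      have := Real.sin_sq_add_cos_sq θ
      ring_nf
      nlinarith [Real.sin_sq_add_cos_sq θ]
    have h3 : M ^ 2 ≤ r ^ 2 := by nlinarith [_root_.sq_abs r, abs_nonneg r]
    simp only []
    nlinarith [norm_nonneg x'', sq_nonneg (‖x''‖)]
  -- change of variables to polar coordinates
  have h1 : (∫ y : ℝ × ℝ, V (y.1, y.2, x'')) =
      ∫ p in polarCoord.target, (p.1 : ℂ) * V (p.1 * Real.cos p.2, p.1 * Real.sin p.2, x'') := by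
    rw [← integral_comp_polarCoord_symm (fun y : ℝ × ℝ => V (y.1, y.2, x''))]
    apply setIntegral_congr_fun (polarCoord.open_target.measurableSet)
    intro p _
    simp [polarCoord_symm_apply, Complex.real_smul]
  rw [h1, polarCoord_target]
  -- split the radial half-line at R
  have hsplit : (Ioi (0:ℝ)) ×ˢ (Ioo (-Real.pi) Real.pi) =
      (Ioc (0:ℝ) R) ×ˢ (Ioo (-Real.pi) Real.pi) ∪ (Ioi R) ×ˢ (Ioo (-Real.pi) Real.pi) := by
    rw [← Set.union_prod, Set.Ioc_union_Ioi_eq_Ioi (le_trans hM.le hR)]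
  have hmeas2 : MeasurableSet ((Ioi R) ×ˢ (Ioo (-Real.pi) Real.pi)) :=
    measurableSet_Ioi.prod measurableSet_Ioo
  have hzero2 : EqOn (fun p : ℝ × ℝ => (p.1 : ℂ) * V (p.1 * Real.cos p.2, p.1 * Real.sin p.2, x''))
      0 ((Ioi R) ×ˢ (Ioo (-Real.pi) Real.pi)) := by
    intro p hp
    have : M ≤ |p.1| := le_trans hR (le_trans (le_of_lt hp.1) (le_abs_self _))
    simp [hvan p.1 p.2 this]
  have hF : Continuous (fun p : ℝ × ℝ =>
      (p.1 : ℂ) * V (p.1 * Real.cos p.2, p.1 * Real.sin p.2, x'')) := by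
    apply Continuous.mul
    · exact Complex.continuous_ofReal.comp continuous_fst
    · exact hV.comp ((continuous_fst.mul (Real.continuous_cos.comp continuous_snd)).prodMk
        ((continuous_fst.mul (Real.continuous_sin.comp continuous_snd)).prodMk
          continuous_const))
  have hint1 : IntegrableOn (fun p : ℝ × ℝ =>
      (p.1 : ℂ) * V (p.1 * Real.cos p.2, p.1 * Real.sin p.2, x''))
      ((Ioc (0:ℝ) R) ×ˢ (Ioo (-Real.pi) Real.pi)) volume := by
    apply (hF.continuousOn.integrableOn_compact
      ((isCompact_Icc (a := (0:ℝ)) (b := R)).prod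
        (isCompact_Icc (a := -Real.pi) (b := Real.pi)))).mono_set
    exact Set.prod_mono Set.Ioc_subset_Icc_self Set.Ioo_subset_Icc_self
  have hint2 : IntegrableOn (fun p : ℝ × ℝ =>
      (p.1 : ℂ) * V (p.1 * Real.cos p.2, p.1 * Real.sin p.2, x''))
      ((Ioi R) ×ˢ (Ioo (-Real.pi) Real.pi)) volume :=
    integrableOn_zero.congr_fun hzero2.symm hmeas2
  rw [hsplit, setIntegral_union (Set.disjoint_left.mpr ?hdis) hmeas2 hint1 hint2]
  case hdis =>
    rintro p hp1 hp2
    exact absurd hp2.1 (not_lt.mpr hp1.1.2)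
  rw [setIntegral_congr_fun hmeas2 hzero2]
  simp only [Pi.zero_apply, integral_zero, add_zero]
  -- iterated integral
  rw [Measure.volume_eq_prod, setIntegral_prod _ (by rwa [← Measure.volume_eq_prod])]
  -- outer: Ioc 0 R as interval integral; inner: shift by periodicity
  rw [intervalIntegral.integral_of_le (le_trans hM.le hR)]
  apply setIntegral_congr_fun measurableSet_Ioc
  intro r _
  have hper : Function.Periodic
      (fun θ : ℝ => (r : ℂ) * V (r * Real.cos θ, r * Real.sin θ, x'')) (2 * Real.pi) := by
    intro t
    simp [Real.cos_add_two_pi, Real.sin_add_two_pi]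
  have := hper.intervalIntegral_add_eq (-Real.pi) 0
  have hpi : -Real.pi + 2 * Real.pi = Real.pi := by ring
  rw [hpi, zero_add] at this
  beta_reduce
  rw [← integral_Ioc_eq_integral_Ioo,
    ← intervalIntegral.integral_of_le (by linarith [Real.pi_pos] : -Real.pi ≤ Real.pi)]
  exact this

/-- the Eskin–Ralston circle-integral computation. We model `ℝⁿ`, `n = m + 2 ≥ 3`,
as `ℝ × ℝ × ℝᵐ`; `W₁, W₂` are the first two components of a `C¹` vector field supported in
`B(0,M)`, and `φ` solves `(∂₁ + i∂₂)φ = -(W₁ + iW₂)` with decay `|φ| ≤ C⟨x'⟩⁻¹`. Then for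
every fixed `x''`,
`lim_{R→∞} i ∫_{|x'|=R} e^{iφ}(ν₁+iν₂) dS = ∫_{ℝ²} (W₁+iW₂) dx'`,
the circle integral being written in polar coordinates. -/
theorem stmt9 (m : ℕ) (hm : 1 ≤ m) (M C : ℝ) (hM : 0 < M)
    (W₁ W₂ : ℝ × ℝ × EuclideanSpace ℝ (Fin m) → ℂ)
    (hW₁ : ContDiff ℝ 1 W₁) (hW₂ : ContDiff ℝ 1 W₂)
    (hsupp : ∀ p : ℝ × ℝ × EuclideanSpace ℝ (Fin m),
      M ^ 2 ≤ p.1 ^ 2 + p.2.1 ^ 2 + ‖p.2.2‖ ^ 2 → W₁ p = 0 ∧ W₂ p = 0)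
    (φ : ℝ × ℝ × EuclideanSpace ℝ (Fin m) → ℂ) (hφ : ContDiff ℝ 1 φ)
    (hφeq : ∀ p, fderiv ℝ φ p (1, 0, 0) + I * fderiv ℝ φ p (0, 1, 0) = -(W₁ p + I * W₂ p))
    (hφdecay : ∀ p, ‖φ p‖ ≤ C * (1 + p.1 ^ 2 + p.2.1 ^ 2) ^ (-(1:ℝ)/2)) :
    ∀ x'' : EuclideanSpace ℝ (Fin m),
      Tendsto (fun R : ℝ =>
          I * ∫ θ in (0:ℝ)..(2 * Real.pi),
            Complex.exp (I * φ (R * Real.cos θ, R * Real.sin θ, x'')) *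
              ((Real.cos θ : ℂ) + (Real.sin θ : ℂ) * I) * (R : ℂ))
        atTop
        (nhds (∫ y : ℝ × ℝ, (W₁ (y.1, y.2, x'') + I * W₂ (y.1, y.2, x'')))) := by
  intro x''
  have hC : 0 ≤ C := by
    have h0 := hφdecay (0, 0, 0)
    norm_num [Real.one_rpow] at h0
    exact le_trans (norm_nonneg _) h0
  set V : ℝ × ℝ × EuclideanSpace ℝ (Fin m) → ℂ := fun p => W₁ p + I * W₂ p with hV_def
  have hVc : Continuous V := hW₁.continuous.add (continuous_const.mul hW₂.continuous)
  have hVsupp : ∀ p : ℝ × ℝ × EuclideanSpace ℝ (Fin m),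
      M ^ 2 ≤ p.1 ^ 2 + p.2.1 ^ 2 + ‖p.2.2‖ ^ 2 → V p = 0 := by
    intro p hp
    simp [hV_def, (hsupp p hp).1, (hsupp p hp).2]
  have heq : ∀ p, fderiv ℝ φ p (1, 0, 0) + I * fderiv ℝ φ p (0, 1, 0) = -V p := hφeq
  set T : ℂ := ∫ y : ℝ × ℝ, V (y.1, y.2, x'') with hT_def
  show Tendsto (fun R : ℝ =>
      I * ∫ θ in (0:ℝ)..(2 * Real.pi),
        Complex.exp (I * φ (R * Real.cos θ, R * Real.sin θ, x'')) * eC θ * (R : ℂ))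
    atTop (nhds T)
  set K : ℝ := 3 / 2 * Real.pi * C ^ 2 with hK_def
  -- the main eventual estimate
  have hest : ∀ R : ℝ, M ≤ R → C ≤ R → 1 ≤ R →
      ‖(I * ∫ θ in (0:ℝ)..(2 * Real.pi),
          Complex.exp (I * φ (R * Real.cos θ, R * Real.sin θ, x'')) * eC θ * (R : ℂ)) - T‖
        ≤ K / R := by
    intro R hRM hRC hR1
    have hR0 : (0:ℝ) < R := lt_of_lt_of_le one_pos hR1
    have hgreenR := green V φ hVc hφ heq x'' R
    have hpolarR := polar_eq V hVc M hM hVsupp x'' R hRM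
    have hS : (∫ θ in (0:ℝ)..(2 * Real.pi),
        (R : ℂ) * φ (R * Real.cos θ, R * Real.sin θ, x'') * eC θ) = -T := by
      have h := hpolarR.trans hgreenR
      exact (neg_eq_iff_eq_neg.mpr h).symm
    -- continuity facts
    have hcont : Continuous fun θ : ℝ => φ (R * Real.cos θ, R * Real.sin θ, x'') := by
      apply hφ.continuous.comp
      exact (continuous_const.mul Real.continuous_cos).prodMk
        ((continuous_const.mul Real.continuous_sin).prodMk continuous_const)
    have heCc : Continuous eC := by
      unfold eC
      exact (Complex.continuous_ofReal.comp Real.continuous_cos).add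
        ((Complex.continuous_ofReal.comp Real.continuous_sin).mul continuous_const)
    have i1 : IntervalIntegrable (fun θ : ℝ =>
        (Complex.exp (I * φ (R * Real.cos θ, R * Real.sin θ, x'')) - 1 -
          I * φ (R * Real.cos θ, R * Real.sin θ, x'')) * eC θ * (R : ℂ))
        volume 0 (2 * Real.pi) :=
      ((((Complex.continuous_exp.comp (continuous_const.mul hcont)).sub
        continuous_const).sub (continuous_const.mul hcont)).mul heCc).mul
        continuous_const |>.intervalIntegrable _ _
    have i2 : IntervalIntegrable (fun θ : ℝ => eC θ * (R : ℂ)) volume 0 (2 * Real.pi) :=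
      (heCc.mul continuous_const).intervalIntegrable _ _
    have i3 : IntervalIntegrable (fun θ : ℝ =>
        I * φ (R * Real.cos θ, R * Real.sin θ, x'') * eC θ * (R : ℂ))
        volume 0 (2 * Real.pi) :=
      (((continuous_const.mul hcont).mul heCc).mul continuous_const).intervalIntegrable _ _
    have hsplit_int : (∫ θ in (0:ℝ)..(2 * Real.pi),
        Complex.exp (I * φ (R * Real.cos θ, R * Real.sin θ, x'')) * eC θ * (R : ℂ)) =
        (∫ θ in (0:ℝ)..(2 * Real.pi),
          (Complex.exp (I * φ (R * Real.cos θ, R * Real.sin θ, x'')) - 1 -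
            I * φ (R * Real.cos θ, R * Real.sin θ, x'')) * eC θ * (R : ℂ)) +
        ((∫ θ in (0:ℝ)..(2 * Real.pi), eC θ * (R : ℂ)) +
         (∫ θ in (0:ℝ)..(2 * Real.pi),
           I * φ (R * Real.cos θ, R * Real.sin θ, x'') * eC θ * (R : ℂ))) := by
      rw [← intervalIntegral.integral_add i2 i3, ← intervalIntegral.integral_add i1 (i2.add i3)]
      apply intervalIntegral.integral_congr
      intro θ _
      ring
    have he2 : (∫ θ in (0:ℝ)..(2 * Real.pi), eC θ * (R : ℂ)) = 0 := by
      have hfn : (fun θ : ℝ => eC θ * (R : ℂ)) = fun θ : ℝ =>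
          (R : ℂ) * (Real.cos θ : ℂ) + ((R : ℂ) * I) * (Real.sin θ : ℂ) :=
        funext fun θ => by simp only [eC]; ring
      have c1 : Continuous fun θ : ℝ => (R : ℂ) * (Real.cos θ : ℂ) :=
        continuous_const.mul (by exact Complex.continuous_ofReal.comp Real.continuous_cos)
      have c2 : Continuous fun θ : ℝ => ((R : ℂ) * I) * (Real.sin θ : ℂ) :=
        continuous_const.mul (by exact Complex.continuous_ofReal.comp Real.continuous_sin)
      rw [hfn, intervalIntegral.integral_add (c1.intervalIntegrable _ _)
        (c2.intervalIntegrable _ _),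
        intervalIntegral.integral_const_mul, intervalIntegral.integral_const_mul,
        intervalIntegral.integral_ofReal, intervalIntegral.integral_ofReal,
        integral_cos, integral_sin]
      simp [Real.sin_two_pi, Real.cos_two_pi]
    have he3 : (∫ θ in (0:ℝ)..(2 * Real.pi),
        I * φ (R * Real.cos θ, R * Real.sin θ, x'') * eC θ * (R : ℂ)) = I * -T := by
      have hfn : (fun θ : ℝ => I * φ (R * Real.cos θ, R * Real.sin θ, x'') * eC θ * (R : ℂ)) =
          fun θ : ℝ => I * ((R : ℂ) * φ (R * Real.cos θ, R * Real.sin θ, x'') * eC θ) :=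
        funext fun θ => by ring
      rw [hfn, intervalIntegral.integral_const_mul, hS]
    have hEqT : (I * ∫ θ in (0:ℝ)..(2 * Real.pi),
        Complex.exp (I * φ (R * Real.cos θ, R * Real.sin θ, x'')) * eC θ * (R : ℂ)) - T =
        I * ∫ θ in (0:ℝ)..(2 * Real.pi),
          (Complex.exp (I * φ (R * Real.cos θ, R * Real.sin θ, x'')) - 1 -
            I * φ (R * Real.cos θ, R * Real.sin θ, x'')) * eC θ * (R : ℂ) := by
      rw [hsplit_int, he2, he3]
      linear_combination (-T : ℂ) * Complex.I_mul_I
    rw [hEqT]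
    -- now bound the remainder integral
    have h1R : (0:ℝ) < 1 + R ^ 2 := by positivity
    have hrpow : ((1 + R ^ 2 : ℝ)) ^ (-(1:ℝ)/2) ≤ R⁻¹ := by
      rw [neg_div, Real.rpow_neg h1R.le, ← Real.sqrt_eq_rpow]
      apply inv_anti₀ hR0
      exact (Real.le_sqrt hR0.le h1R.le).mpr (by nlinarith)
    have hsq : (((1 + R ^ 2 : ℝ)) ^ (-(1:ℝ)/2)) ^ 2 = (1 + R ^ 2)⁻¹ := by
      rw [← Real.rpow_natCast ((1 + R ^ 2 : ℝ) ^ (-(1:ℝ)/2)) 2, ← Real.rpow_mul h1R.le]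
      norm_num [Real.rpow_neg_one]
    have hbd : ∀ θ ∈ Set.uIoc (0:ℝ) (2 * Real.pi),
        ‖(Complex.exp (I * φ (R * Real.cos θ, R * Real.sin θ, x'')) - 1 -
          I * φ (R * Real.cos θ, R * Real.sin θ, x'')) * eC θ * (R : ℂ)‖ ≤
          3 / 4 * C ^ 2 * (1 + R ^ 2)⁻¹ * R := by
      intro θ _
      have hdec := hφdecay (R * Real.cos θ, R * Real.sin θ, x'')
      have hbase : (1 + (R * Real.cos θ) ^ 2 + (R * Real.sin θ) ^ 2 : ℝ) = 1 + R ^ 2 := by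
        nlinarith [Real.sin_sq_add_cos_sq θ]
      rw [hbase] at hdec
      have hφR : ‖φ (R * Real.cos θ, R * Real.sin θ, x'')‖ ≤ C * (1 + R ^ 2) ^ (-(1:ℝ)/2) := hdec
      have hφ1 : ‖φ (R * Real.cos θ, R * Real.sin θ, x'')‖ ≤ 1 := by
        calc ‖φ (R * Real.cos θ, R * Real.sin θ, x'')‖ ≤ C * (1 + R ^ 2) ^ (-(1:ℝ)/2) := hdec
        _ ≤ C * R⁻¹ := mul_le_mul_of_nonneg_left hrpow hC
        _ ≤ R * R⁻¹ := mul_le_mul_of_nonneg_right hRC (inv_nonneg.mpr hR0.le)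
        _ = 1 := mul_inv_cancel₀ hR0.ne'
      set z : ℂ := I * φ (R * Real.cos θ, R * Real.sin θ, x'') with hz_def
      have hznorm : ‖z‖ = ‖φ (R * Real.cos θ, R * Real.sin θ, x'')‖ := by
        rw [hz_def, norm_mul, Complex.norm_I, one_mul]
      have hz1 : ‖z‖ ≤ 1 := by
        rw [hznorm]; exact hφ1
      have hexp := Complex.exp_bound hz1 (n := 2) (by norm_num)
      have hsum : (∑ i ∈ Finset.range 2, z ^ i / (Nat.factorial i : ℂ)) = 1 + z := by
        simp [Finset.sum_range_succ]
      rw [hsum] at hexp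
      norm_num [Nat.factorial] at hexp
      have hexp' : ‖Complex.exp z - 1 - z‖ ≤ 3 / 4 * ‖z‖ ^ 2 := by
        rw [show Complex.exp z - 1 - z = Complex.exp z - (1 + z) by ring]
        linarith [hexp]
      have heC1 : ‖eC θ‖ = 1 := by
        rw [eC, Complex.norm_def, Complex.normSq_add_mul_I]
        rw [Real.cos_sq_add_sin_sq]
        exact Real.sqrt_one
      rw [norm_mul, norm_mul, heC1, mul_one, Complex.norm_real, Real.norm_eq_abs,
        abs_of_pos hR0]
      apply mul_le_mul_of_nonneg_right _ hR0.le
      calc ‖Complex.exp z - 1 - z‖ ≤ 3 / 4 * ‖z‖ ^ 2 := hexp'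
      _ ≤ 3 / 4 * (C * (1 + R ^ 2) ^ (-(1:ℝ)/2)) ^ 2 := by
          apply mul_le_mul_of_nonneg_left _ (by norm_num)
          apply pow_le_pow_left₀ (norm_nonneg _)
          rw [hznorm]; exact hφR
      _ = 3 / 4 * C ^ 2 * (1 + R ^ 2)⁻¹ := by rw [mul_pow, hsq]; ring
    have hbound := intervalIntegral.norm_integral_le_of_norm_le_const hbd
    rw [norm_mul, Complex.norm_I, one_mul]
    calc ‖∫ θ in (0:ℝ)..(2 * Real.pi),
          (Complex.exp (I * φ (R * Real.cos θ, R * Real.sin θ, x'')) - 1 -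
            I * φ (R * Real.cos θ, R * Real.sin θ, x'')) * eC θ * (R : ℂ)‖ ≤
        3 / 4 * C ^ 2 * (1 + R ^ 2)⁻¹ * R * |2 * Real.pi - 0| := hbound
    _ ≤ K / R := by
        rw [sub_zero, abs_of_pos (by positivity : (0:ℝ) < 2 * Real.pi), le_div_iff₀ hR0, hK_def]
        have hD : (0:ℝ) ≤ (1 + R ^ 2)⁻¹ := (inv_pos.mpr h1R).le
        have key2 : (1 + R ^ 2)⁻¹ * (R * R) = 1 - (1 + R ^ 2)⁻¹ := by
          field_simp
          ring
        have key3 := congrArg (fun t : ℝ => 3 / 2 * Real.pi * C ^ 2 * t) key2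
        beta_reduce at key3
        nlinarith [key3, mul_nonneg (mul_nonneg Real.pi_pos.le (sq_nonneg C)) hD]
  -- conclude the limit
  have hev : ∀ᶠ R : ℝ in atTop,
      ‖(fun R : ℝ => (I * ∫ θ in (0:ℝ)..(2 * Real.pi),
          Complex.exp (I * φ (R * Real.cos θ, R * Real.sin θ, x'')) * eC θ * (R : ℂ)) - T) R‖
        ≤ K / R := by
    filter_upwards [Filter.eventually_ge_atTop M, Filter.eventually_ge_atTop C,
      Filter.eventually_ge_atTop 1] with R h1 h2 h3
    exact hest R h1 h2 h3
  have hKR : Tendsto (fun R : ℝ => K / R) atTop (nhds 0) :=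
    Tendsto.div_atTop tendsto_const_nhds tendsto_id
  have hsub : Tendsto (fun R : ℝ => (I * ∫ θ in (0:ℝ)..(2 * Real.pi),
      Complex.exp (I * φ (R * Real.cos θ, R * Real.sin θ, x'')) * eC θ * (R : ℂ)) - T)
      atTop (nhds 0) := squeeze_zero_norm' hev hKR
  have := hsub.add_const T
  simpa using this
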